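/- Let C and D be model categories, and let L : D ⥤ C be a functor that preserves all small colimits and sends cofibrations of D to cofibrations of C (for instance, a left Quillen functor). Let X : Δᵒᵖ ⥤ C be a simplicial object in C, let ι*X : Δ₀ᵒᵖ ⥤ C denote its restriction along the inclusion Δ₀ ⊆ Δ, and suppose there is a diagram Y : Δ₀ᵒᵖ ⥤ D all of whose latching maps Lₙ(Y) ⟶ Y([n]) are cofibrations in D, together with a natural isomorphism Y ⋙ L ≅ ι*X. Then every latching map Lₙ(X) ⟶ X([n]) of X is a cofibration in C; that is, X is Reedy cofibrant. -/

import Mathlib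

open CategoryTheory CategoryTheory.Limits Opposite

universe v v' u u'

/-! ### The subcategory `Δ₀` of the simplex category and latching objects -/

/-- The subcategory `Δ₀` of the simplex category `Δ` with the same objects and those
monotone maps `f` with `f 0 = 0`.  Every epimorphism of `Δ` lies in `Δ₀`. -/
structure Delta0 : Type where
  toObj : SimplexCategory

instance : Category.{0} Delta0 where
  Hom a b := { f : a.toObj ⟶ b.toObj // f.toOrderHom 0 = 0 }
  id a := ⟨𝟙 a.toObj, rfl⟩
  comp f g := ⟨f.1 ≫ g.1, by
    simp only [SimplexCategory.comp_toOrderHom, OrderHom.comp_coe, Function.comp_apply, f.2, g.2]⟩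

/-- The inclusion functor `Δ₀ ⥤ Δ`. -/
def Delta0.incl : Delta0 ⥤ SimplexCategory where
  obj a := a.toObj
  map f := f.1

/-- The index category for the `n`-th latching object: its objects are the non-identity
epimorphisms `α : [n] ↠ [k]` of `Δ` (all of which lie in `Δ₀`), and a morphism `α ⟶ α′`
is an epimorphism `φ : [k′] ↠ [k]` with `α′ ≫ φ = α` (i.e. the opposite of the category
whose morphisms `α → α′` are the epimorphisms `φ` with `φ ∘ α = α′`, so that the diagram
below is covariant). -/
structure LatchingIndex (n : Delta0) : Type where
  k : Delta0
  π : n ⟶ k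
  epi : Epi π.1
  not_identity : ¬ IsIso π.1

instance (n : Delta0) : Category.{0} (LatchingIndex n) where
  Hom a b := { φ : b.k ⟶ a.k // b.π ≫ φ = a.π ∧ Epi φ.1 }
  id a := ⟨𝟙 a.k, by simp, show Epi (𝟙 a.k.toObj) from inferInstance⟩
  comp {a b c} f g := ⟨g.1 ≫ f.1, by
      rw [← Category.assoc, g.2.1, f.2.1],
    by
      haveI := g.2.2
      haveI := f.2.2
      exact epi_comp _ _⟩

variable {E : Type u} [Category.{v} E]

/-- The latching diagram of a `Δ₀ᵒᵖ`-shaped diagram in `E` at `[n]`, sending a non-identity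
epimorphism `α : [n] ↠ [k]` to `X [k]`. -/
def latchingDiagram (X : Delta0ᵒᵖ ⥤ E) (n : Delta0) : LatchingIndex n ⥤ E where
  obj a := X.obj (op a.k)
  map f := X.map f.1.op
  map_id a := by
    show X.map (𝟙 a.k).op = _
    rw [op_id, X.map_id]
  map_comp {a b c} f g := by
    show X.map (g.1 ≫ f.1).op = _
    rw [op_comp, X.map_comp]

/-- The cocone on the latching diagram with vertex `X [n]` whose components are the maps
`X α : X [k] ⟶ X [n]`. -/
def latchingCocone (X : Delta0ᵒᵖ ⥤ E) (n : Delta0) : Cocone (latchingDiagram X n) where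
  pt := X.obj (op n)
  ι :=
    { app := fun a => X.map a.π.op
      naturality := fun a b f => by
        dsimp [latchingDiagram]
        rw [← X.map_comp, ← op_comp, f.2.1, Category.comp_id] }

/-- The `n`-th latching map `Lₙ(X) ⟶ X [n]` of a `Δ₀ᵒᵖ`-shaped diagram. -/
noncomputable def latchingMap [HasColimits E] (X : Delta0ᵒᵖ ⥤ E) (n : Delta0) :
    colimit (latchingDiagram X n) ⟶ X.obj (op n) :=
  colimit.desc (latchingDiagram X n) (latchingCocone X n)

/-! ### Model categories -/

/-- A class of morphisms is stable under retracts if whenever `f` is a retract of `g`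
(in the arrow category) and `g` lies in the class, so does `f`. -/
def StableUnderRetracts (P : MorphismProperty E) : Prop :=
  ∀ ⦃A B A' B' : E⦄ (f : A ⟶ B) (g : A' ⟶ B')
    (iA : A ⟶ A') (rA : A' ⟶ A) (iB : B ⟶ B') (rB : B' ⟶ B),
    iA ≫ rA = 𝟙 A → iB ≫ rB = 𝟙 B → iA ≫ g = f ≫ iB → g ≫ rB = rA ≫ f →
    P g → P f

/-- A model structure on a bicomplete category `E`: classes of weak equivalences,
cofibrations and fibrations satisfying Quillen's axioms (two-out-of-three, closure under
retracts, lifting, and factorization). -/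
structure ModelStructure (E : Type u) [Category.{v} E] where
  weq : MorphismProperty E
  cof : MorphismProperty E
  fib : MorphismProperty E
  weq_two_out_of_three : weq.HasTwoOutOfThreeProperty
  weq_retract : StableUnderRetracts weq
  cof_retract : StableUnderRetracts cof
  fib_retract : StableUnderRetracts fib
  lift_cof_trivFib : ∀ ⦃A B X Y : E⦄ (i : A ⟶ B) (p : X ⟶ Y),
    cof i → fib p → weq p → HasLiftingProperty i p
  lift_trivCof_fib : ∀ ⦃A B X Y : E⦄ (i : A ⟶ B) (p : X ⟶ Y),
    cof i → weq i → fib p → HasLiftingProperty i p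
  factor_cof_trivFib : ∀ ⦃X Y : E⦄ (f : X ⟶ Y), ∃ (Z : E) (g : X ⟶ Z) (h : Z ⟶ Y),
    g ≫ h = f ∧ cof g ∧ fib h ∧ weq h
  factor_trivCof_fib : ∀ ⦃X Y : E⦄ (f : X ⟶ Y), ∃ (Z : E) (g : X ⟶ Z) (h : Z ⟶ Y),
    g ≫ h = f ∧ cof g ∧ weq g ∧ fib h

section
open CategoryTheory CategoryTheory.Limits Opposite
theorem cof_of_arrow_iso {E : Type u} [Category.{v} E] {P : MorphismProperty E}
    (hP : StableUnderRetracts P) {A B A' B' : E} {f : A ⟶ B} {g : A' ⟶ B'}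
    (u : A ≅ A') (w : B ≅ B') (sq : u.hom ≫ g = f ≫ w.hom) (hg : P g) : P f := by
  refine hP f g u.hom u.inv w.hom w.inv (by simp) (by simp) sq ?_ hg
  have hg' : g = u.inv ≫ f ≫ w.hom := by rw [← sq]; simp
  rw [hg']
  simp
end

/-- **Lifting Reedy cofibrancy along a colimit-preserving functor.**  Let `C` and `D` be
(bicomplete) model categories, and let `L : D ⥤ C` preserve all small colimits and send
cofibrations to cofibrations (e.g. a left Quillen functor).  Let `X : Δᵒᵖ ⥤ C` be a
simplicial object, `ι*X : Δ₀ᵒᵖ ⥤ C` its restriction along `Δ₀ ⊆ Δ`, and suppose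
`Y : Δ₀ᵒᵖ ⥤ D` has all latching maps cofibrations and `Y ⋙ L ≅ ι*X`.  Then every latching
map of `X` (equivalently, of `ι*X`, since latching objects only involve the epimorphisms of
`Δ`, all of which lie in `Δ₀`) is a cofibration in `C`; that is, `X` is Reedy cofibrant. -/
theorem latching_cofibration_of_lift
    {C : Type u} [Category.{v} C] [HasLimits C] [HasColimits C]
    {D : Type u'} [Category.{v'} D] [HasLimits D] [HasColimits D]
    (mC : ModelStructure C) (mD : ModelStructure D)
    (L : D ⥤ C) [PreservesColimits L]
    (hL : ∀ ⦃A B : D⦄ (f : A ⟶ B), mD.cof f → mC.cof (L.map f))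
    (X : SimplexCategoryᵒᵖ ⥤ C) (Y : Delta0ᵒᵖ ⥤ D)
    (hY : ∀ n : Delta0, mD.cof (latchingMap Y n))
    (e : Y ⋙ L ≅ Delta0.incl.op ⋙ X) :
    ∀ n : Delta0, mC.cof (latchingMap (Delta0.incl.op ⋙ X) n) := by
  intro n
  haveI : PreservesColimitsOfSize.{0, 0} L := preservesColimitsOfSize_shrink.{0, v, 0, v} L
  let φ : latchingDiagram Y n ⋙ L ≅ latchingDiagram (Delta0.incl.op ⋙ X) n :=
    NatIso.ofComponents (fun a => e.app (op a.k)) (fun {a b} f => e.hom.naturality f.1.op)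
  let h : L.obj (colimit (latchingDiagram Y n)) ≅
      colimit (latchingDiagram (Delta0.incl.op ⋙ X) n) :=
    preservesColimitIso L (latchingDiagram Y n) ≪≫ HasColimit.isoOfNatIso φ
  have sq' : (preservesColimitIso L (latchingDiagram Y n)).inv ≫
      L.map (latchingMap Y n) ≫ e.hom.app (op n) =
      (HasColimit.isoOfNatIso φ).hom ≫ latchingMap (Delta0.incl.op ⋙ X) n := by
    apply colimit.hom_ext
    intro a
    rw [ι_preservesColimitIso_inv_assoc, ← L.map_comp_assoc,
      HasColimit.isoOfNatIso_ι_hom_assoc]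
    simp only [latchingMap, colimit.ι_desc]
    dsimp [latchingCocone, φ]
    erw [colimit.ι_desc, colimit.ι_desc]
    exact e.hom.naturality a.π.op
  have key : h.inv ≫ L.map (latchingMap Y n) ≫ e.hom.app (op n) =
      latchingMap (Delta0.incl.op ⋙ X) n := by
    rw [Iso.trans_inv, Category.assoc, sq', Iso.inv_hom_id_assoc]
  refine cof_of_arrow_iso mC.cof_retract h.symm (e.app (op n)).symm ?_ (hL _ (hY n))
  rw [← key]
  simp
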